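/- Let K and N be positive integers, f₀, x₀, λ ∈ ℝ, f(t) = f₀ + λ·t, and let x : ℕ → ℝ satisfy x(0) = x₀ and x(t+1) = (K·f(t) + N·x(t))/(K+N) for all t ∈ ℕ. Then for every t ∈ ℕ, the gap f(t) − x(t) is a convex combination of f₀ − x₀ and λ·(K+N)/K; in particular min(f₀ − x₀, λ·(K+N)/K) ≤ f(t) − x(t) ≤ max(f₀ − x₀, λ·(K+N)/K). -/

import Mathlib

lemma convex_min_max (a b u v : ℝ) (ha : 0 ≤ a) (hb : 0 ≤ b) (hab : a + b = 1) :
    min u v ≤ a * u + b * v ∧ a * u + b * v ≤ max u v := by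
  have h1 := min_le_left u v
  have h2 := min_le_right u v
  have h3 := le_max_left u v
  have h4 := le_max_right u v
  constructor
  · calc min u v = a * min u v + b * min u v := by rw [← add_mul, hab, one_mul]
      _ ≤ a * u + b * v :=
        add_le_add (mul_le_mul_of_nonneg_left h1 ha) (mul_le_mul_of_nonneg_left h2 hb)
  · calc a * u + b * v ≤ a * max u v + b * max u v :=
        add_le_add (mul_le_mul_of_nonneg_left h3 ha) (mul_le_mul_of_nonneg_left h4 hb)
      _ = max u v := by rw [← add_mul, hab, one_mul]

theorem hk_gap_convex_combination
    (K N : ℕ) (hK : 0 < K) (hN : 0 < N)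
    (f₀ x₀ l : ℝ) (f : ℕ → ℝ) (hf : ∀ t : ℕ, f t = f₀ + l * (t : ℝ))
    (x : ℕ → ℝ) (hx0 : x 0 = x₀)
    (hx : ∀ t : ℕ, x (t + 1) = ((K : ℝ) * f t + (N : ℝ) * x t) / ((K : ℝ) + (N : ℝ))) :
    ∀ t : ℕ,
      (∃ a b : ℝ, 0 ≤ a ∧ 0 ≤ b ∧ a + b = 1 ∧
        f t - x t = a * (f₀ - x₀) + b * (l * ((K : ℝ) + (N : ℝ)) / (K : ℝ))) ∧
      min (f₀ - x₀) (l * ((K : ℝ) + (N : ℝ)) / (K : ℝ)) ≤ f t - x t ∧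
      f t - x t ≤ max (f₀ - x₀) (l * ((K : ℝ) + (N : ℝ)) / (K : ℝ)) := by
  have hKpos : (0:ℝ) < (K:ℝ) := by exact_mod_cast hK
  have hNpos : (0:ℝ) < (N:ℝ) := by exact_mod_cast hN
  have hKN : (0:ℝ) < (K:ℝ) + (N:ℝ) := by linarith
  set g : ℝ := l * ((K : ℝ) + (N : ℝ)) / (K : ℝ) with hg
  set r : ℝ := (N:ℝ) / ((K:ℝ) + (N:ℝ)) with hr
  have hr0 : 0 ≤ r := by positivity
  have hr1 : r ≤ 1 := by rw [hr, div_le_one hKN]; linarith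
  -- the key existence statement by induction
  have key : ∀ t : ℕ, ∃ a b : ℝ, 0 ≤ a ∧ 0 ≤ b ∧ a + b = 1 ∧
      f t - x t = a * (f₀ - x₀) + b * g := by
    intro t
    induction t with
    | zero =>
      refine ⟨1, 0, by norm_num, le_refl 0, by norm_num, ?_⟩
      rw [hf, hx0]; push_cast; ring
    | succ n ih =>
      obtain ⟨a, b, ha, hb, hab, hgap⟩ := ih
      refine ⟨r * a, r * b + (1 - r), by positivity, by nlinarith, by nlinarith, ?_⟩
      have step : f (n+1) - x (n+1) = l + r * (f n - x n) := by
        rw [hx n, hf (n+1), hf n, hr]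
        field_simp
        push_cast; ring
      have hlg : l = (1 - r) * g := by
        rw [hg, hr]; field_simp; ring
      rw [step, hgap, hlg]; ring
  intro t
  obtain ⟨a, b, ha, hb, hab, hgap⟩ := key t
  have cb := convex_min_max a b (f₀ - x₀) g ha hb hab
  exact ⟨⟨a, b, ha, hb, hab, hgap⟩, by rw [hgap]; exact cb.1, by rw [hgap]; exact cb.2⟩
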